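/- Let S be a finitely generated subring of the complex numbers ℂ and let s ∈ S be nonzero. Then for all sufficiently large primes p there exists a ring homomorphism φ : S → k, where k is the algebraic closure of the field with p elements, such that φ(s) ≠ 0. -/

import Mathlib

open FirstOrder Language Field Ring FreeCommRing

section aux

variable {α : Type} [Fintype α] (qs : Finset (FreeCommRing α)) (g : FreeCommRing α)

/-- The sentence saying there is a common zero of all elements of `qs` where `g` doesn't vanish. -/
noncomputable def mySentence : Language.ring.Sentence :=
  Formula.iExs α (Formula.relabel (Sum.inr : α → Empty ⊕ α)
    ((BoundedFormula.iInf fun q : qs =>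
        Term.equal (termOfFreeCommRing q.1) (termOfFreeCommRing 0)) ⊓
      ∼(Term.equal (termOfFreeCommRing g) (termOfFreeCommRing 0))))

theorem realize_mySentence (K : Type*) [Field K] [CompatibleRing K] :
    (K ⊨ mySentence qs g) ↔
      ∃ x : α → K, (∀ q ∈ qs, FreeCommRing.lift x q = 0) ∧ FreeCommRing.lift x g ≠ 0 := by
  simp only [mySentence, Sentence.Realize, Formula.realize_iExs, Formula.realize_relabel,
    Sum.elim_comp_inr]
  refine exists_congr fun x => ?_
  rw [Formula.realize_inf, Formula.realize_not, Formula.realize_equal]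
  show (BoundedFormula.Realize _ _ _ ∧ _) ↔ _
  rw [BoundedFormula.realize_iInf]
  simp only [realize_termOfFreeCommRing, map_zero]
  constructor
  · rintro ⟨h1, h2⟩
    refine ⟨fun q hq => ?_, h2⟩
    have h3 := Formula.realize_equal.1 (h1 ⟨q, hq⟩)
    rw [realize_termOfFreeCommRing, realize_termOfFreeCommRing, map_zero] at h3
    exact h3
  · rintro ⟨h1, h2⟩
    refine ⟨fun q => ?_, h2⟩
    refine Formula.realize_equal.2 ?_
    rw [realize_termOfFreeCommRing, realize_termOfFreeCommRing, map_zero]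
    exact h1 q.1 q.2

end aux



/-- If `S ⊆ ℂ` is a finitely generated subring and `0 ≠ s ∈ S`, then for all
sufficiently large primes `p` there is a ring homomorphism `φ : S → k`, `k` the algebraic
closure of `𝔽_p`, with `φ(s) ≠ 0`. -/
theorem exists_hom_to_char_p_ne_zero (S : Subring ℂ) (hS : S.FG) (s : S) (hs : s ≠ 0) :
    ∃ N : ℕ, ∀ p : ℕ, N ≤ p → p.Prime → ∀ [Fact p.Prime],
      ∃ φ : S →+* AlgebraicClosure (ZMod p), φ s ≠ 0 := by
  classical
  obtain ⟨t, ht⟩ := hS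
  set α := {x : ℂ // x ∈ t} with hα
  have htS : ∀ x : α, (x : ℂ) ∈ S := by
    intro x
    have h := AddSubgroup.subset_closure (k := (↑t : Set ℂ)) (Finset.mem_coe.2 x.2)
    rw [ht] at h
    exact h
  let vS : α → S := fun a => ⟨a.1, htS a⟩
  let f : FreeCommRing α →+* S := FreeCommRing.lift vS
  have hcomp : S.subtype.comp f = FreeCommRing.lift (fun a : α => (a : ℂ)) := by
    apply FreeCommRing.hom_ext
    intro a
    simp [f, vS]
  have hfsurj : Function.Surjective f := by
    intro x
    have h1 : (x : ℂ) ∈ AddSubgroup.closure (t : Set ℂ) := by rw [ht]; exact x.2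
    have h2 : AddSubgroup.closure (t : Set ℂ) ≤ (S.subtype.comp f).range.toAddSubgroup := by
      refine (AddSubgroup.closure_le _).2 ?_
      intro c hc
      exact ⟨FreeCommRing.of (⟨c, hc⟩ : α), by rw [hcomp]; simp⟩
    obtain ⟨y, hy⟩ := h2 h1
    exact ⟨y, Subtype.ext hy⟩
  haveI : IsNoetherianRing (FreeCommRing α) :=
    isNoetherianRing_of_ringEquiv _ (freeCommRingEquivMvPolynomialInt (α := α)).symm
  obtain ⟨qs, hqs⟩ : (RingHom.ker f).FG := IsNoetherian.noetherian _
  obtain ⟨g, hg⟩ := hfsurj s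
  -- the sentence is realized in ℂ
  letI := compatibleRingOfRing ℂ
  haveI : CharP ℂ 0 := CharP.ofCharZero ℂ
  have hC : ℂ ⊨ mySentence qs g := by
    rw [realize_mySentence]
    refine ⟨fun a => (a : ℂ), fun q hq => ?_, ?_⟩
    · have hqker : q ∈ RingHom.ker f := by
        rw [← hqs]; exact Ideal.subset_span hq
      have := congrArg (fun h : FreeCommRing α →+* ℂ => h q) hcomp
      simp only [RingHom.comp_apply] at this
      rw [← this]
      simp [RingHom.mem_ker.1 hqker]
    · have := congrArg (fun h : FreeCommRing α →+* ℂ => h g) hcomp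
      simp only [RingHom.comp_apply] at this
      rw [← this, hg]
      simpa using fun h => hs (Subtype.ext h)
  have hACF0 : Theory.ACF 0 ⊨ᵇ mySentence qs g :=
    ((ACF_isComplete (Or.inr rfl)).realize_sentence_iff _ ℂ).1 hC
  have hfin := finite_ACF_prime_not_realize_of_ACF_zero_realize _ hACF0
  obtain ⟨N₀, hN₀⟩ := (hfin.image (fun p : Nat.Primes => (p : ℕ))).bddAbove
  refine ⟨N₀ + 1, fun p hp hpprime _ => ?_⟩
  have hACFp : Theory.ACF p ⊨ᵇ mySentence qs g := by
    by_contra hcon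
    have : (p : ℕ) ≤ N₀ := hN₀ ⟨⟨p, hpprime⟩, hcon, rfl⟩
    omega
  set k := AlgebraicClosure (ZMod p)
  letI := compatibleRingOfRing k
  haveI : CharP k p := charP_of_injective_algebraMap
    (RingHom.injective (algebraMap (ZMod p) k)) p
  have hk : k ⊨ mySentence qs g := hACFp.realize_sentence k
  rw [realize_mySentence] at hk
  obtain ⟨x, hx1, hx2⟩ := hk
  have hker_le : RingHom.ker f ≤ RingHom.ker (FreeCommRing.lift x) := by
    rw [← hqs, Ideal.span_le]
    intro q hq
    exact RingHom.mem_ker.2 (hx1 q hq)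
  let e := RingHom.quotientKerEquivOfSurjective hfsurj
  let φ : S →+* k :=
    (Ideal.Quotient.lift (RingHom.ker f) (FreeCommRing.lift x) fun a ha => RingHom.mem_ker.1 (hker_le ha)).comp
      (e.symm : S →+* (FreeCommRing α ⧸ RingHom.ker f))
  refine ⟨φ, ?_⟩
  have he : e.symm s = Ideal.Quotient.mk (RingHom.ker f) g := by
    apply e.injective
    rw [RingEquiv.apply_symm_apply, ← hg]
    rfl
  have hφs : φ s = (Ideal.Quotient.lift (RingHom.ker f) (FreeCommRing.lift x)
      fun a ha => RingHom.mem_ker.1 (hker_le ha)) (e.symm s) := rfl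
  rw [hφs, he, Ideal.Quotient.lift_mk]
  exact hx2
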